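/- Let m be an even positive integer and define the linear map T : ℝ^{m/2} → ℂ by T(e_k) = -i·sin(π/m)·exp((2k-1)πi/m) for 1 ≤ k ≤ m/2. For 1 ≤ k ≤ m/2, let w_k ∈ {-1,1}^{m/2} be the vector with first k entries -1 and remaining entries +1. Then T(w_k) = exp(2kπi/m). -/

import Mathlib

open Complex

theorem zonotope_map_on_wk (m : ℕ) (hm : 0 < m) (hme : Even m)
    (T : (Fin (m / 2) → ℝ) →ₗ[ℝ] ℂ)
    (hT : ∀ j : Fin (m / 2),
      T (Pi.single j 1) =
        -Complex.I * (Real.sin (Real.pi / m) : ℂ) *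
          Complex.exp ((2 * ((j : ℕ) + 1 : ℂ) - 1) * (Real.pi : ℂ) * Complex.I / (m : ℂ)))
    (k : ℕ) (hk1 : 1 ≤ k) (hk : k ≤ m / 2) :
    T (fun j => if (j : ℕ) + 1 ≤ k then (-1 : ℝ) else 1) =
      Complex.exp (2 * (k : ℂ) * (Real.pi : ℂ) * Complex.I / (m : ℂ)) := by
  have hm0 : (m : ℂ) ≠ 0 := Nat.cast_ne_zero.mpr hm.ne'
  set g : ℕ → ℂ := fun n => Complex.exp (2 * (n : ℂ) * (Real.pi : ℂ) * Complex.I / (m : ℂ))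
    with hg
  have key : ∀ j : ℕ,
      -Complex.I * (Real.sin (Real.pi / m) : ℂ) *
        Complex.exp ((2 * ((j : ℕ) + 1 : ℂ) - 1) * (Real.pi : ℂ) * Complex.I / (m : ℂ)) =
      (g j - g (j + 1)) / 2 := by
    intro j
    have hsin : ((Real.sin (Real.pi / m) : ℝ) : ℂ) = Complex.sin ((Real.pi : ℂ) / (m : ℂ)) := by
      rw [Complex.ofReal_sin]; push_cast; ring_nf
    rw [hsin, Complex.sin]
    have h1 : Complex.exp (-((Real.pi : ℂ) / (m : ℂ)) * Complex.I) *
        Complex.exp ((2 * ((j : ℕ) + 1 : ℂ) - 1) * (Real.pi : ℂ) * Complex.I / (m : ℂ)) = g j := by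
      rw [← Complex.exp_add, hg]
      congr 1
      field_simp
      ring
    have h2 : Complex.exp (((Real.pi : ℂ) / (m : ℂ)) * Complex.I) *
        Complex.exp ((2 * ((j : ℕ) + 1 : ℂ) - 1) * (Real.pi : ℂ) * Complex.I / (m : ℂ)) = g (j + 1) := by
      rw [← Complex.exp_add, hg]
      congr 1
      push_cast
      field_simp
      ring
    have hI : Complex.I * Complex.I = -1 := Complex.I_mul_I
    calc -Complex.I * ((Complex.exp (-((Real.pi : ℂ) / (m : ℂ)) * Complex.I) -
            Complex.exp (((Real.pi : ℂ) / (m : ℂ)) * Complex.I)) * Complex.I / 2) *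
          Complex.exp ((2 * ((j : ℕ) + 1 : ℂ) - 1) * (Real.pi : ℂ) * Complex.I / (m : ℂ))
        = -(Complex.I * Complex.I) *
            (Complex.exp (-((Real.pi : ℂ) / (m : ℂ)) * Complex.I) *
              Complex.exp ((2 * ((j : ℕ) + 1 : ℂ) - 1) * (Real.pi : ℂ) * Complex.I / (m : ℂ)) -
             Complex.exp (((Real.pi : ℂ) / (m : ℂ)) * Complex.I) *
              Complex.exp ((2 * ((j : ℕ) + 1 : ℂ) - 1) * (Real.pi : ℂ) * Complex.I / (m : ℂ))) / 2 := by
          ring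
      _ = (g j - g (j + 1)) / 2 := by rw [h1, h2, hI]; ring
  have hx : (fun j : Fin (m / 2) => if (j : ℕ) + 1 ≤ k then (-1 : ℝ) else 1) =
      ∑ j : Fin (m / 2), Pi.single j (if (j : ℕ) + 1 ≤ k then (-1 : ℝ) else 1) :=
    (Finset.univ_sum_single _).symm
  have hsingle : ∀ (j : Fin (m / 2)),
      (Pi.single j (if (j : ℕ) + 1 ≤ k then (-1 : ℝ) else 1) : Fin (m / 2) → ℝ) =
      (if (j : ℕ) + 1 ≤ k then (-1 : ℝ) else 1) • (Pi.single j 1 : Fin (m / 2) → ℝ) := by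
    intro j
    rw [← Pi.single_smul, smul_eq_mul, mul_one]
  rw [hx, map_sum]
  simp_rw [hsingle, map_smul, hT, key]
  have hsum : ∑ j : Fin (m / 2),
      (if (j : ℕ) + 1 ≤ k then (-1 : ℝ) else 1) • ((g j - g (j + 1)) / 2) =
      ∑ j ∈ Finset.range (m / 2),
        (if j + 1 ≤ k then (-1 : ℝ) else 1) • ((g j - g (j + 1)) / 2) :=
    Fin.sum_univ_eq_sum_range
      (fun j => (if j + 1 ≤ k then (-1 : ℝ) else 1) • ((g j - g (j + 1)) / 2)) (m / 2)
  rw [hsum]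
  have hsplit : ∀ j : ℕ, (if j + 1 ≤ k then (-1 : ℝ) else 1) • ((g j - g (j + 1)) / 2) =
      (g j - g (j + 1)) / 2 - (if j < k then (g j - g (j + 1)) else 0) := by
    intro j
    by_cases h : j + 1 ≤ k
    · rw [if_pos h, if_pos (Nat.lt_of_succ_le h), Complex.real_smul]
      push_cast
      ring
    · rw [if_neg h, if_neg (by omega : ¬ j < k), Complex.real_smul]
      push_cast
      ring
  simp_rw [hsplit]
  rw [Finset.sum_sub_distrib]
  have h1 : ∑ j ∈ Finset.range (m / 2), (g j - g (j + 1)) / 2 = (g 0 - g (m / 2)) / 2 := by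
    rw [← Finset.sum_div, Finset.sum_range_sub' g]
  have h2 : ∑ j ∈ Finset.range (m / 2), (if j < k then (g j - g (j + 1)) else 0) =
      g 0 - g k := by
    rw [← Finset.sum_range_sub' g (n := k)]
    rw [← Finset.sum_subset (Finset.range_subset_range.mpr hk)]
    · apply Finset.sum_congr rfl
      intro j hj
      simp [Finset.mem_range.mp hj]
    · intro j _ hj
      simp only [Finset.mem_range] at hj
      rw [if_neg (by omega)]
  rw [h1, h2]
  have hg0 : g 0 = 1 := by simp [hg]
  have hgm : g (m / 2) = -1 := by
    have h2m : ((m / 2 : ℕ) : ℂ) * 2 = (m : ℂ) := by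
      have h := Nat.div_mul_cancel hme.two_dvd
      exact_mod_cast congrArg (fun n : ℕ => (n : ℂ)) h
    have : 2 * ((m / 2 : ℕ) : ℂ) * (Real.pi : ℂ) * Complex.I / (m : ℂ) =
        (Real.pi : ℂ) * Complex.I := by
      field_simp
      linear_combination h2m
    rw [hg]
    simp only [this]
    exact Complex.exp_pi_mul_I
  rw [hg0, hgm, hg]
  ring
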